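/- arXiv:2601.20824 — 3 statements merged into one kernel-verified Lean document; each statement's English description precedes it below -/
import Mathlib

section
/- The region R_2 = {(b_1, b_2) ∈ ℝ² : the polynomial x⁴ + b_1 x³ + b_2 x² + b_1 x + 1 has all roots on the unit circle occurring in conjugate pairs} is exactly the set {(b_1, b_2) : |b_1| ≤ 4 and 2|b_1| − 2 ≤ b_2 ≤ 2 + (b_1/2)²}. -/
lemma key_factor (θ : ℝ) (x : ℂ) :
    (x - Complex.exp (θ * Complex.I)) * (x - Complex.exp (-θ * Complex.I)) =
      x ^ 2 - 2 * (Real.cos θ : ℂ) * x + 1 := by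
  rw [Complex.exp_mul_I, Complex.exp_mul_I, Complex.cos_neg, Complex.sin_neg,
    Complex.ofReal_cos]
  have hs : Complex.sin θ ^ 2 + Complex.cos θ ^ 2 = 1 := Complex.sin_sq_add_cos_sq _
  linear_combination hs - (Complex.sin θ) ^ 2 * Complex.I_sq

/-- The region `R₂` of pairs `(b₁, b₂)` such that `x⁴ + b₁x³ + b₂x² + b₁x + 1` has all
roots on the unit circle occurring in conjugate pairs is exactly
`{(b₁,b₂) : |b₁| ≤ 4, 2|b₁| - 2 ≤ b₂ ≤ 2 + (b₁/2)²}`. -/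
theorem stmt2 :
    {b : ℝ × ℝ | ∃ θ₁ θ₂ : ℝ, ∀ x : ℂ,
        x ^ 4 + (b.1 : ℂ) * x ^ 3 + (b.2 : ℂ) * x ^ 2 + (b.1 : ℂ) * x + 1 =
          (x - Complex.exp (θ₁ * Complex.I)) * (x - Complex.exp (-θ₁ * Complex.I)) *
            ((x - Complex.exp (θ₂ * Complex.I)) * (x - Complex.exp (-θ₂ * Complex.I)))} =
      {b : ℝ × ℝ | |b.1| ≤ 4 ∧ 2 * |b.1| - 2 ≤ b.2 ∧ b.2 ≤ 2 + (b.1 / 2) ^ 2} := by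
  ext b
  simp only [Set.mem_setOf_eq]
  constructor
  · rintro ⟨θ₁, θ₂, h⟩
    have hb1 : Real.cos θ₁ ≤ 1 := Real.cos_le_one θ₁
    have hb1' : -1 ≤ Real.cos θ₁ := Real.neg_one_le_cos θ₁
    have hb2 : Real.cos θ₂ ≤ 1 := Real.cos_le_one θ₂
    have hb2' : -1 ≤ Real.cos θ₂ := Real.neg_one_le_cos θ₂
    have e1 := h 1
    have e2 := h (-1)
    rw [key_factor, key_factor] at e1 e2
    have r1C : ((2:ℂ) + 2 * b.1 + b.2) =
        (2 - 2 * (Real.cos θ₁ : ℂ)) * (2 - 2 * (Real.cos θ₂ : ℂ)) := by linear_combination e1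
    have r2C : ((2:ℂ) - 2 * b.1 + b.2) =
        (2 + 2 * (Real.cos θ₁ : ℂ)) * (2 + 2 * (Real.cos θ₂ : ℂ)) := by linear_combination e2
    have r1 : (2:ℝ) + 2 * b.1 + b.2 = (2 - 2 * Real.cos θ₁) * (2 - 2 * Real.cos θ₂) := by
      exact_mod_cast r1C
    have r2 : (2:ℝ) - 2 * b.1 + b.2 = (2 + 2 * Real.cos θ₁) * (2 + 2 * Real.cos θ₂) := by
      exact_mod_cast r2C
    have hsum : b.1 = -2 * (Real.cos θ₁ + Real.cos θ₂) := by nlinarith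
    have hprod : b.2 = 2 + 4 * (Real.cos θ₁ * Real.cos θ₂) := by nlinarith
    have k1 : (0:ℝ) ≤ (1 + Real.cos θ₁) * (1 + Real.cos θ₂) := by nlinarith
    have k2 : (0:ℝ) ≤ (1 - Real.cos θ₁) * (1 - Real.cos θ₂) := by nlinarith
    have k3 : (0:ℝ) ≤ (Real.cos θ₁ - Real.cos θ₂) ^ 2 := sq_nonneg _
    refine ⟨?_, ?_, by nlinarith⟩
    · rw [abs_le]; constructor <;> nlinarith
    · rcases abs_cases b.1 with ⟨ha, hsgn⟩ | ⟨ha, hsgn⟩ <;> rw [ha] <;> nlinarith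
  · rintro ⟨h1, h2, h3⟩
    rw [abs_le] at h1
    have habs : -b.1 ≤ |b.1| := neg_le_abs b.1
    have habs' : b.1 ≤ |b.1| := le_abs_self b.1
    have hD0 : (0:ℝ) ≤ (b.1 / 2) ^ 2 + 2 - b.2 := by linarith
    set s := Real.sqrt ((b.1 / 2) ^ 2 + 2 - b.2) with hs
    have hs0 : 0 ≤ s := Real.sqrt_nonneg _
    have hs2 : s ^ 2 = (b.1 / 2) ^ 2 + 2 - b.2 := Real.sq_sqrt hD0
    have hu1 : s ≤ 2 + b.1 / 2 := by
      rw [hs, show (2 + b.1 / 2 : ℝ) = Real.sqrt ((2 + b.1 / 2) ^ 2) from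
        (Real.sqrt_sq (by linarith)).symm]
      apply Real.sqrt_le_sqrt
      nlinarith
    have hu2 : s ≤ 2 - b.1 / 2 := by
      rw [hs, show (2 - b.1 / 2 : ℝ) = Real.sqrt ((2 - b.1 / 2) ^ 2) from
        (Real.sqrt_sq (by linarith)).symm]
      apply Real.sqrt_le_sqrt
      nlinarith
    have hcb1 : -1 ≤ -b.1 / 4 + s / 2 ∧ -b.1 / 4 + s / 2 ≤ 1 :=
      ⟨by linarith, by linarith⟩
    have hcb2 : -1 ≤ -b.1 / 4 - s / 2 ∧ -b.1 / 4 - s / 2 ≤ 1 :=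
      ⟨by linarith, by linarith⟩
    refine ⟨Real.arccos (-b.1 / 4 + s / 2), Real.arccos (-b.1 / 4 - s / 2), fun x => ?_⟩
    rw [key_factor, key_factor, Real.cos_arccos hcb1.1 hcb1.2, Real.cos_arccos hcb2.1 hcb2.2]
    have hs2C : ((s : ℝ) : ℂ) ^ 2 = ((b.1 : ℝ) : ℂ) ^ 2 / 4 + 2 - b.2 := by
      have : s ^ 2 = b.1 ^ 2 / 4 + 2 - b.2 := by rw [hs2]; ring
      exact_mod_cast this
    push_cast
    linear_combination x ^ 2 * hs2C
end

section
/- Let P(x) ∈ ℤ[x] be a polynomial of degree e whose coefficients are not all divisible by a prime l. Then for every positive integer k, the number of residues x ∈ ℤ/l^k ℤ with P(x) ≡ 0 (mod l^k) is at most e · l^{k − ⌈k/e⌉}. -/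
open Polynomial

private lemma coeffCompCMulX (p : Polynomial ℤ) (a : ℤ) (j : ℕ) :
    (p.comp (C a * X)).coeff j = p.coeff j * a ^ j := by
  induction p using Polynomial.induction_on' with
  | add p q hp hq => simp only [add_comp, coeff_add, hp, hq, add_mul]
  | monomial n b =>
    simp only [monomial_comp, mul_pow, ← C_pow, coeff_monomial]
    rw [mul_comm (C b), mul_assoc, coeff_C_mul, coeff_mul_C, coeff_X_pow]
    by_cases h : n = j
    · subst h; simp; ring
    · simp only [if_neg h, if_neg (fun hh : j = n => h hh.symm), zero_mul, mul_zero]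

private lemma modMulEq (a b x : ℕ) (ha : 0 < a) (hb : 0 < b) :
    x % (a * b) = a * ((x / a) % b) + x % a := by
  conv_lhs => rw [← Nat.div_add_mod x a]
  rw [← Nat.mod_add_mod, Nat.mul_mod_mul_left]
  refine Nat.mod_eq_of_lt ?_
  have h1 : (x / a) % b ≤ b - 1 := Nat.le_pred_of_lt (Nat.mod_lt _ hb)
  have h2 : x % a < a := Nat.mod_lt _ ha
  have h3 := Nat.mul_le_mul_left a h1
  have h4 : a * (b - 1 + 1) = a * (b - 1) + a := Nat.mul_succ a (b-1)
  have h5 : b - 1 + 1 = b := Nat.succ_pred_eq_of_pos hb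
  rw [h5] at h4
  omega

open scoped Classical in
private lemma keyCount (l : ℕ) [hlf : Fact l.Prime] (e : ℕ) (he : 0 < e) :
    ∀ k : ℕ, 0 < k → ∀ P : Polynomial ℤ,
      ¬ ((l:ℤ) ∣ P.content) →
      Multiset.card ((P.map (Int.castRingHom (ZMod l))).roots) ≤ e →
      ((Finset.range (l^k)).filter (fun x : ℕ => (l:ℤ)^k ∣ P.eval (x:ℤ))).card
        ≤ Multiset.card ((P.map (Int.castRingHom (ZMod l))).roots) * l ^ (k - (k+e-1)/e) := by
  intro k
  induction k using Nat.strong_induction_on with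
  | _ k ih =>
  intro hk P hc hD
  classical
  have hl : l.Prime := hlf.out
  have hlp : Prime (l:ℤ) := Nat.prime_iff_prime_int.1 hl
  set φ := Int.castRingHom (ZMod l) with hφ
  set Pb := P.map φ with hPbdef
  have hl0 : 0 < l := hl.pos
  have hP0 : P ≠ 0 := fun h => hc (by rw [h, content_zero]; exact dvd_zero _)
  have hPb0 : Pb ≠ 0 := by
    intro h
    apply hc
    rw [dvd_content_iff_C_dvd, C_dvd_iff_dvd_coeff]
    intro i
    have h2 : (↑(P.coeff i) : ZMod l) = 0 := by
      have := congrArg (fun q => Polynomial.coeff q i) h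
      simpa [hPbdef, coeff_map] using this
    exact (ZMod.intCast_zmod_eq_zero_iff_dvd _ _).1 h2
  set a := (k + e - 1)/e with hadef
  set S := (Finset.range (l^k)).filter (fun x : ℕ => (l:ℤ)^k ∣ P.eval (x:ℤ)) with hSdef
  set T := (Finset.range l).filter (fun r : ℕ => Pb.IsRoot ((r : ℕ) : ZMod l)) with hTdef
  have hevalcast : ∀ x : ℕ, Pb.eval ((x : ℕ) : ZMod l) = ((P.eval (x:ℤ) : ℤ) : ZMod l) := by
    intro x
    have : ((x : ℕ) : ZMod l) = (((x:ℤ)) : ZMod l) := by push_cast; ring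
    rw [this, hPbdef, eval_intCast_map]; rfl
  have hmaps : ∀ x ∈ S, x % l ∈ T := by
    intro x hx
    rw [hSdef, Finset.mem_filter] at hx
    obtain ⟨-, hdvd⟩ := hx
    rw [hTdef, Finset.mem_filter, Finset.mem_range]
    refine ⟨Nat.mod_lt _ hl0, ?_⟩
    have h1 : (l:ℤ) ∣ P.eval (x:ℤ) := (dvd_pow_self (l:ℤ) hk.ne').trans hdvd
    have h2 : (l:ℤ) ∣ ((x % l : ℕ) : ℤ) - (x:ℤ) := by
      have := Nat.div_add_mod x l
      have hcast : (x:ℤ) = (l:ℤ) * ((x / l : ℕ) : ℤ) + ((x % l : ℕ) : ℤ) := by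
        exact_mod_cast congrArg (fun t : ℕ => (t:ℤ)) this.symm
      rw [hcast]; ring_nf; exact ⟨-((x / l : ℕ) : ℤ), by ring⟩
    have h3 : (l:ℤ) ∣ P.eval ((x % l : ℕ) : ℤ) := by
      have hdiff := sub_dvd_eval_sub ((x % l : ℕ) : ℤ) (x:ℤ) P
      have h4 := h2.trans hdiff
      have h5 := dvd_add h4 h1
      rwa [sub_add_cancel] at h5
    have h6 := hevalcast (x % l)
    rw [IsRoot, h6]
    exact (ZMod.intCast_zmod_eq_zero_iff_dvd _ _).2 h3
  have hkey : ∀ r ∈ T, (S.filter (fun x => x % l = r)).card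
      ≤ (Pb.rootMultiplicity ((r : ℕ) : ZMod l)) * l ^ (k - a) := by
    intro r hr
    rw [hTdef, Finset.mem_filter, Finset.mem_range] at hr
    obtain ⟨hrl, hroot⟩ := hr
    set m := Pb.rootMultiplicity ((r : ℕ) : ZMod l) with hmdef
    have hm1 : 1 ≤ m := (rootMultiplicity_pos hPb0).2 hroot
    have hme : m ≤ e := le_trans (by rw [hmdef, ← count_roots]; exact Multiset.count_le_card _ _) hD
    -- Taylor expansion of P at r, and the polynomial Q(Y) = P(r + lY)
    set b := taylor (r:ℤ) P with hbdef
    set Q := b.comp (C (l:ℤ) * X) with hQdef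
    have hQcoeff : ∀ j, Q.coeff j = b.coeff j * (l:ℤ)^j := fun j => coeffCompCMulX b (l:ℤ) j
    have hQeval : ∀ y : ℤ, Q.eval y = P.eval ((l:ℤ) * y + (r:ℤ)) := by
      intro y
      rw [hQdef, eval_comp, hbdef, taylor_eval]
      simp
    have hb0 : b ≠ 0 := by
      intro h
      exact hP0 (taylor_injective (r:ℤ) (by rw [← hbdef, h, map_zero]))
    have hQ0 : Q ≠ 0 := by
      intro h
      apply hb0
      ext j
      have := congrArg (fun q => Polynomial.coeff q j) h
      simp only [hQcoeff] at this
      have hlj : ((l:ℤ))^j ≠ 0 := pow_ne_zero _ (by exact_mod_cast hl0.ne')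
      simpa [coeff_zero, mul_eq_zero, hlj] using this
    set c := Q.content with hcdef
    have hc0 : c ≠ 0 := fun h => hQ0 (content_eq_zero_iff.1 h)
    -- the reduction of b mod l and the multiplicity m
    set bb := taylor ((r : ℕ) : ZMod l) Pb with hbbdef
    have hbmap : b.map φ = bb := by
      rw [hbdef, hbbdef, taylor_apply, taylor_apply, Polynomial.map_comp]
      congr 1
      simp only [Polynomial.map_add, map_X, map_C]
      congr 1
      congr 1
      simp [hφ]
    have hbb0 : bb ≠ 0 := by
      intro h
      exact hPb0 (taylor_injective _ (by rw [← hbbdef, h, map_zero]))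
    have hmtr : m = bb.natTrailingDegree := by
      rw [hmdef, rootMultiplicity_eq_natTrailingDegree, ← taylor_apply, hbbdef]
    have hbm : ¬ (l:ℤ) ∣ b.coeff m := by
      intro hdvd
      have h1 : bb.coeff m = 0 := by
        rw [← hbmap, coeff_map, hφ]
        exact (ZMod.intCast_zmod_eq_zero_iff_dvd _ _).2 hdvd
      rw [hmtr] at h1
      exact hbb0 (trailingCoeff_eq_zero.1 h1)
    -- l divides the content of Q
    have hlc : (l:ℤ) ∣ c := by
      rw [hcdef, dvd_content_iff_C_dvd, C_dvd_iff_dvd_coeff]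
      intro j
      rcases j with _ | j
      · rw [hQcoeff 0, pow_zero, mul_one, hbdef, taylor_coeff_zero]
        have h6 := hevalcast r
        rw [IsRoot] at hroot
        rw [h6] at hroot
        exact (ZMod.intCast_zmod_eq_zero_iff_dvd _ _).1 hroot
      · rw [hQcoeff (j+1)]
        exact Dvd.dvd.mul_left (dvd_pow_self (l:ℤ) (Nat.succ_ne_zero j)) _
    set s := (c.natAbs).factorization l with hsdef
    have hcnat : c.natAbs ≠ 0 := Int.natAbs_ne_zero.2 hc0
    have hdvd_iff : ∀ t : ℕ, (l:ℤ)^t ∣ c ↔ t ≤ s := by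
      intro t
      rw [hsdef, ← Nat.Prime.pow_dvd_iff_le_factorization hl hcnat, ← Int.natCast_dvd]
      push_cast
      rfl
    have hs1 : 1 ≤ s := (hdvd_iff 1).1 (by simpa using hlc)
    obtain ⟨c', hcc'⟩ := (hdvd_iff s).2 le_rfl
    have hlc' : ¬ (l:ℤ) ∣ c' := by
      intro hd
      obtain ⟨d, hd'⟩ := hd
      have : (l:ℤ)^(s+1) ∣ c := ⟨d, by rw [hcc', hd', pow_succ]; ring⟩
      have := (hdvd_iff (s+1)).1 this
      omega
    have hcdvd : ∀ j, c ∣ Q.coeff j := fun j => content_dvd_coeff j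
    have hsm : s ≤ m := by
      by_contra hgt
      push_neg at hgt
      have h1 : (l:ℤ)^(m+1) ∣ Q.coeff m :=
        ((pow_dvd_pow (l:ℤ) (by omega : m + 1 ≤ s)).trans ((hdvd_iff s).2 le_rfl)).trans (hcdvd m)
      rw [hQcoeff m, pow_succ, mul_comm (b.coeff m)] at h1
      have hlm : ((l:ℤ))^m ≠ 0 := pow_ne_zero _ (by exact_mod_cast hl0.ne')
      exact hbm ((mul_dvd_mul_iff_left hlm).1 h1)
    -- the primitive part
    set Qt := Q.primPart with hQtdef
    have hQfac : Q = C c * Qt := eq_C_content_mul_primPart Q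
    have hQtc : ¬ (l:ℤ) ∣ Qt.content := by
      rw [hQtdef, content_primPart]
      exact fun h => hlp.not_unit (isUnit_of_dvd_one h)
    have hQtb_deg : (Qt.map φ).natDegree ≤ m := by
      rw [natDegree_le_iff_coeff_eq_zero]
      intro N hN
      have h1 : (l:ℤ)^(s+1) ∣ Q.coeff N := by
        rw [hQcoeff N]
        exact (pow_dvd_pow (l:ℤ) (by omega : s + 1 ≤ N)).trans (dvd_mul_left _ _)
      rw [hQfac, coeff_C_mul, hcc', pow_succ, mul_assoc] at h1
      have hls : ((l:ℤ))^s ≠ 0 := pow_ne_zero _ (by exact_mod_cast hl0.ne')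
      have h2 : (l:ℤ) ∣ c' * Qt.coeff N := (mul_dvd_mul_iff_left hls).1 h1
      have h3 : (l:ℤ) ∣ Qt.coeff N := (hlp.dvd_mul.1 h2).resolve_left hlc'
      rw [coeff_map, hφ]
      exact (ZMod.intCast_zmod_eq_zero_iff_dvd _ _).2 h3
    have hD' : Multiset.card (Qt.map φ).roots ≤ m := le_trans (card_roots' _) hQtb_deg
    rcases lt_or_ge s k with hsk | hks
    · -- case s < k : use the induction hypothesis
      set a' := ((k-s) + e - 1)/e with ha'def
      have hIH := ih (k-s) (by omega) (by omega) Qt hQtc (le_trans hD' hme)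
      set U := (Finset.range (l^(k-s))).filter (fun y : ℕ => (l:ℤ)^(k-s) ∣ Qt.eval (y:ℤ)) with hUdef
      have hls : ((l:ℤ))^s ≠ 0 := pow_ne_zero _ (by exact_mod_cast hl0.ne')
      have hfi : ∀ x ∈ S.filter (fun x => x % l = r), (x / l) % l^(k-s) ∈ U := by
        intro x hx
        simp only [Finset.mem_filter, hSdef, Finset.mem_range] at hx
        obtain ⟨⟨hxlt, hdvd⟩, hxr⟩ := hx
        have hxeq : (x:ℤ) = (l:ℤ) * ((x/l : ℕ) : ℤ) + (r:ℤ) := by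
          have h0 := Nat.div_add_mod x l
          rw [hxr] at h0
          exact_mod_cast (congrArg (fun t : ℕ => (t:ℤ)) h0).symm
        have h1 : (l:ℤ)^k ∣ Q.eval ((x/l : ℕ) : ℤ) := by rw [hQeval, ← hxeq]; exact hdvd
        rw [hQfac, eval_mul, eval_C, hcc'] at h1
        have hsplit : (l:ℤ)^k = (l:ℤ)^s * (l:ℤ)^(k-s) := by rw [← pow_add]; congr 1; omega
        rw [hsplit, mul_assoc] at h1
        have h2 : (l:ℤ)^(k-s) ∣ c' * Qt.eval ((x/l : ℕ):ℤ) := (mul_dvd_mul_iff_left hls).1 h1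
        have h3 : (l:ℤ)^(k-s) ∣ Qt.eval ((x/l : ℕ):ℤ) := hlp.pow_dvd_of_dvd_mul_left _ hlc' h2
        set y := x / l with hydef
        set n := l^(k-s) with hndef
        have hn0 : 0 < n := pow_pos hl0 _
        have h4 : ((l:ℤ))^(k-s) ∣ ((y % n : ℕ) : ℤ) - (y:ℤ) := by
          have h0 := Nat.div_add_mod y n
          have hcast : (y:ℤ) = ((n:ℕ):ℤ) * ((y/n : ℕ):ℤ) + ((y % n : ℕ):ℤ) := by
            exact_mod_cast (congrArg (fun t : ℕ => (t:ℤ)) h0).symm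
          refine ⟨-((y/n : ℕ):ℤ), ?_⟩
          rw [hcast, hndef]
          push_cast
          ring
        have h5 := h4.trans (sub_dvd_eval_sub ((y % n : ℕ):ℤ) (y:ℤ) Qt)
        have h6 : (l:ℤ)^(k-s) ∣ Qt.eval ((y % n : ℕ):ℤ) := by
          have h7 := dvd_add h5 h3
          rwa [sub_add_cancel] at h7
        simp only [hUdef, Finset.mem_filter, Finset.mem_range]
        exact ⟨Nat.mod_lt _ hn0, h6⟩
      have hfib : ∀ v ∈ U, ((S.filter (fun x => x % l = r)).filter
          (fun x => (x / l) % l^(k-s) = v)).card ≤ l^(s-1) := by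
        intro v hv
        rw [← Finset.card_range (l^(s-1))]
        apply Finset.card_le_card_of_injOn (fun x => x / l^(k-s+1))
        · intro x hx
          simp only [Finset.mem_coe, Finset.mem_filter, hSdef, Finset.mem_range] at hx
          rw [Finset.mem_coe, Finset.mem_range]
          apply Nat.div_lt_of_lt_mul
          calc x < l^k := hx.1.1.1
            _ = l^(k-s+1) * l^(s-1) := by rw [← pow_add]; congr 1; omega
        · intro x hx y hy hxy
          simp only [Finset.mem_coe, Finset.mem_filter, hSdef, Finset.mem_range] at hx hy
          obtain ⟨⟨⟨hx1, -⟩, hx2⟩, hx3⟩ := hx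
          obtain ⟨⟨⟨hy1, -⟩, hy2⟩, hy3⟩ := hy
          have hpow : l * l^(k-s) = l^(k-s+1) := (pow_succ' l (k-s)).symm
          have hmx : x % (l * l^(k-s)) = l * v + r := by
            rw [modMulEq l (l^(k-s)) x hl0 (pow_pos hl0 _), hx3, hx2]
          have hmy : y % (l * l^(k-s)) = l * v + r := by
            rw [modMulEq l (l^(k-s)) y hl0 (pow_pos hl0 _), hy3, hy2]
          rw [hpow] at hmx hmy
          have hdm1 := Nat.div_add_mod x (l^(k-s+1))
          have hdm2 := Nat.div_add_mod y (l^(k-s+1))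
          simp only at hxy
          rw [hxy] at hdm1
          omega
      have hcount := Finset.card_le_mul_card_image_of_maps_to hfi (l^(s-1)) hfib
      have h7 : (k-s) ≤ (k-s) * e := Nat.le_mul_of_pos_right _ he
      have ha'le : a' < (k-s) + 1 := by
        rw [ha'def, Nat.div_lt_iff_lt_mul he]
        have h8 : ((k-s)+1)*e = (k-s)*e + e := by ring
        omega
      have h9 : a ≤ a' + 1 := by
        have h8 : a' + 1 = ((k-s) + e - 1 + e)/e := by rw [ha'def, Nat.add_div_right _ he]
        rw [hadef, h8]
        apply Nat.div_le_div_right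
        have hse : s ≤ e := le_trans hsm hme
        omega
      have hexp : (s-1) + ((k-s) - a') ≤ k - a := by omega
      calc (S.filter (fun x => x % l = r)).card ≤ l^(s-1) * U.card := hcount
        _ ≤ l^(s-1) * (m * l^((k-s)-a')) :=
            Nat.mul_le_mul_left _ (le_trans hIH (Nat.mul_le_mul_right _ hD'))
        _ = m * l^((s-1) + ((k-s)-a')) := by rw [pow_add]; ring
        _ ≤ m * l^(k-a) := Nat.mul_le_mul_left _ (Nat.pow_le_pow_right hl0 hexp)
    · -- case k ≤ s : crude bound
      have hke : k ≤ e := le_trans (le_trans hks hsm) hme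
      have ha1 : a = 1 := by
        have h2 : a < 2 := by
          rw [hadef, Nat.div_lt_iff_lt_mul he]
          omega
        have h1 : 1 ≤ a := by
          rw [hadef, Nat.one_le_div_iff he]
          omega
        omega
      have hcard : (S.filter (fun x => x % l = r)).card ≤ l^(k-1) := by
        rw [← Finset.card_range (l^(k-1))]
        apply Finset.card_le_card_of_injOn (fun x => x / l)
        · intro x hx
          simp only [Finset.mem_coe, Finset.mem_filter, hSdef, Finset.mem_range] at hx
          rw [Finset.mem_coe, Finset.mem_range]
          apply Nat.div_lt_of_lt_mul
          calc x < l^k := hx.1.1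
            _ = l * l^(k-1) := by rw [← pow_succ']; congr 1; omega
        · intro x hx y hy hxy
          simp only [Finset.mem_coe, Finset.mem_filter, hSdef, Finset.mem_range] at hx hy
          have hdm1 := Nat.div_add_mod x l
          have hdm2 := Nat.div_add_mod y l
          have hx2 : x % l = r := hx.2
          have hy2 : y % l = r := hy.2
          simp only at hxy
          rw [hxy] at hdm1
          omega
      rw [ha1]
      exact le_trans hcard (Nat.le_mul_of_pos_left _ hm1)
  have hsum : ∑ r ∈ T, Pb.rootMultiplicity ((r : ℕ) : ZMod l) ≤ Multiset.card Pb.roots := by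
    have hinj : ∀ x ∈ T, ∀ y ∈ T, ((x : ℕ) : ZMod l) = ((y : ℕ) : ZMod l) → x = y := by
      intro x hx y hy hxy
      rw [hTdef, Finset.mem_filter, Finset.mem_range] at hx hy
      have := congrArg ZMod.val hxy
      rwa [ZMod.val_cast_of_lt hx.1, ZMod.val_cast_of_lt hy.1] at this
    have h1 : ∑ r ∈ T, Pb.rootMultiplicity ((r : ℕ) : ZMod l)
        = ∑ z ∈ T.image (fun r : ℕ => ((r : ℕ) : ZMod l)), Pb.roots.count z := by
      rw [Finset.sum_image hinj]
      refine Finset.sum_congr rfl fun r _ => ?_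
      rw [count_roots]
    rw [h1, ← Multiset.toFinset_sum_count_eq Pb.roots]
    refine Finset.sum_le_sum_of_subset ?_
    intro z hz
    rw [Finset.mem_image] at hz
    obtain ⟨r, hr, rfl⟩ := hz
    rw [hTdef, Finset.mem_filter] at hr
    rw [Multiset.mem_toFinset, mem_roots']
    exact ⟨hPb0, hr.2⟩
  calc S.card = ∑ r ∈ T, (S.filter (fun x => x % l = r)).card :=
        Finset.card_eq_sum_card_fiberwise hmaps
    _ ≤ ∑ r ∈ T, (Pb.rootMultiplicity ((r : ℕ) : ZMod l)) * l ^ (k - a) :=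
        Finset.sum_le_sum hkey
    _ = (∑ r ∈ T, Pb.rootMultiplicity ((r : ℕ) : ZMod l)) * l ^ (k - a) := by
        rw [Finset.sum_mul]
    _ ≤ Multiset.card Pb.roots * l ^ (k - a) := Nat.mul_le_mul_right _ hsum

/-- Let `P ∈ ℤ[x]` have degree `e > 0` with not all coefficients divisible by a prime
`l`.  Then for every `k ≥ 1` the number of solutions of `P(x) ≡ 0 (mod l^k)` is at most
`e · l^(k - ⌈k/e⌉)`. -/
theorem stmt6 (l : ℕ) (hl : l.Prime) (P : Polynomial ℤ) (e : ℕ) (he : 0 < e)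
    (hdeg : P.natDegree = e)
    (hcont : ∃ i, ¬ (l : ℤ) ∣ P.coeff i) :
    ∀ k : ℕ, 0 < k →
      Nat.card {x : ZMod (l ^ k) // (P.map (Int.castRingHom (ZMod (l ^ k)))).IsRoot x}
        ≤ e * l ^ (k - (k + e - 1) / e) := by
  intro k hk
  classical
  haveI : Fact l.Prime := ⟨hl⟩
  haveI : NeZero (l ^ k) := ⟨pow_ne_zero _ hl.pos.ne'⟩
  have hc : ¬ (l:ℤ) ∣ P.content := by
    intro h
    obtain ⟨i, hi⟩ := hcont
    exact hi ((C_dvd_iff_dvd_coeff _ _).1 (dvd_content_iff_C_dvd.1 h) i)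
  have hD : Multiset.card ((P.map (Int.castRingHom (ZMod l))).roots) ≤ e := by
    refine le_trans (card_roots' _) (le_trans natDegree_map_le (le_of_eq hdeg))
  have hkey := keyCount l e he k hk P hc hD
  set Pm := P.map (Int.castRingHom (ZMod (l^k))) with hPm
  have htrans : Nat.card {x : ZMod (l ^ k) // Pm.IsRoot x}
      ≤ ((Finset.range (l^k)).filter (fun x : ℕ => (l:ℤ)^k ∣ P.eval (x:ℤ))).card := by
    rw [Nat.card_eq_fintype_card, Fintype.card_subtype]
    apply Finset.card_le_card_of_injOn (fun x : ZMod (l^k) => x.val)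
    · intro x hx
      rw [Finset.mem_coe, Finset.mem_filter] at hx
      rw [Finset.mem_coe, Finset.mem_filter, Finset.mem_range]
      refine ⟨ZMod.val_lt x, ?_⟩
      have h1 : Pm.eval x = 0 := hx.2
      have h2 : x = (((x.val : ℤ)) : ZMod (l^k)) := by
        push_cast
        exact (ZMod.natCast_rightInverse x).symm
      rw [h2, hPm, eval_intCast_map] at h1
      have h3 := (ZMod.intCast_zmod_eq_zero_iff_dvd _ _).1 h1
      rwa [Nat.cast_pow] at h3
    · intro x _ y _ hxy
      exact ZMod.val_injective _ hxy
  calc Nat.card {x : ZMod (l ^ k) // Pm.IsRoot x}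
      ≤ _ := htrans
    _ ≤ Multiset.card ((P.map (Int.castRingHom (ZMod l))).roots) * l ^ (k - (k + e - 1) / e) := hkey
    _ ≤ e * l ^ (k - (k + e - 1) / e) := Nat.mul_le_mul_right _ hD
end

section
/- Let L/K be an extension of fields, let α be algebraic over K with minimal polynomial of degree d, and β algebraic over K generating a Galois extension K(β)/K of degree n, such that the Galois closure of K(α) over K intersects K(β) in K, and the characteristic of K is 0. Then α + β generates the compositum K(α, β), which has degree dn over K. -/
open IntermediateField
open Polynomial

-- coefficients of ∏ (X - C r) with r ∈ N lie in N
lemma coeff_prod_mem {Ω K : Type*} [Field K] [Field Ω] [Algebra K Ω]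
    (N : IntermediateField K Ω) (s : Multiset Ω) (hs : ∀ r ∈ s, r ∈ N) (i : ℕ) :
    ((s.map fun r => X - C r).prod).coeff i ∈ N := by
  induction s using Multiset.induction_on generalizing i with
  | empty => rw [Multiset.map_zero, Multiset.prod_zero, Polynomial.coeff_one]; split <;> [exact one_mem N; exact zero_mem N]
  | cons a t ih =>
    have ha : a ∈ N := hs a (Multiset.mem_cons_self a t)
    rw [Multiset.map_cons, Multiset.prod_cons, Polynomial.coeff_mul]
    refine sum_mem fun x hx => mul_mem ?_ (ih (fun r hr => hs r (Multiset.mem_cons_of_mem hr)) _)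
    rw [Polynomial.coeff_sub, Polynomial.coeff_X, Polynomial.coeff_C]
    refine sub_mem ?_ ?_ <;> split <;> first | exact one_mem N | exact zero_mem N | exact ha

/-- If `α` has degree `d` over `K`, `K(β)/K` is Galois of degree `n`, the Galois
closure of `K(α)` meets `K(β)` in `K`, and `char K = 0`, then `α + β` generates the
compositum `K(α, β)`, which has degree `d·n` over `K`. -/
theorem stmt13 (K Ω : Type*) [Field K] [CharZero K] [Field Ω] [Algebra K Ω]
    [IsAlgClosed Ω]
    (α β : Ω) (hα : IsIntegral K α) (hβ : IsIntegral K β)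
    (d n : ℕ) (hd : (minpoly K α).natDegree = d)
    (hGal : IsGalois K K⟮β⟯) (hn : Module.finrank K K⟮β⟯ = n)
    (hint : normalClosure K K⟮α⟯ Ω ⊓ K⟮β⟯ = ⊥) :
    K⟮α + β⟯ = K⟮α⟯ ⊔ K⟮β⟯ ∧ Module.finrank K K⟮α + β⟯ = d * n := by
  haveI : CharZero Ω := charZero_of_injective_algebraMap (algebraMap K Ω).injective
  haveI := hGal.to_normal
  set N := normalClosure K K⟮α⟯ Ω with hN
  set B := K⟮β⟯ with hB
  set M := K⟮α⟯ ⊔ K⟮β⟯ with hM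
  haveI : FiniteDimensional K K⟮α⟯ := adjoin.finiteDimensional hα
  haveI : FiniteDimensional K B := adjoin.finiteDimensional hβ
  haveI : FiniteDimensional K ↥M := finiteDimensional_sup _ _
  have hαM : α ∈ M := (le_sup_left : K⟮α⟯ ≤ M) (mem_adjoin_simple_self K α)
  have hβM : β ∈ M := (le_sup_right : B ≤ M) (mem_adjoin_simple_self K β)
  have hsum : α + β ∈ M := add_mem hαM hβM
  -- roots of minpoly K α lie in N
  have hroots : ∀ r : Ω, aeval r (minpoly K α) = 0 → r ∈ N := by
    intro r hr
    have hr' : r ∈ (minpoly K α).aroots Ω := by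
      rw [Polynomial.mem_aroots]
      exact ⟨minpoly.ne_zero hα, hr⟩
    let f := (algHomAdjoinIntegralEquiv K hα).symm ⟨r, hr'⟩
    have hgen : f (AdjoinSimple.gen K α) = r :=
      algHomAdjoinIntegralEquiv_symm_apply_gen K hα ⟨r, hr'⟩
    exact f.fieldRange_le_normalClosure ⟨_, hgen⟩
  -- the minimal polynomial of α over B has degree d
  have hαB : IsIntegral ↥B α := hα.tower_top
  have hdeg : (minpoly ↥B α).natDegree = d := by
    set p := minpoly ↥B α with hp
    have hdvd : p ∣ (minpoly K α).map (algebraMap K ↥B) :=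
      minpoly.dvd_map_of_isScalarTower K ↥B α
    have hqmapne : ((minpoly K α).map (algebraMap K ↥B)) ≠ 0 :=
      Polynomial.map_ne_zero (minpoly.ne_zero hα)
    have hle : p.natDegree ≤ d := by
      have := Polynomial.natDegree_le_of_dvd hdvd hqmapne
      rwa [Polynomial.natDegree_map, hd] at this
    -- coefficients of p lie in K
    have hcoeff : ∀ i, p.coeff i ∈ Set.range (algebraMap K ↥B) := by
      intro i
      have hpΩdvd : p.map (algebraMap ↥B Ω) ∣ (minpoly K α).map (algebraMap K Ω) := by
        have := Polynomial.map_dvd (algebraMap ↥B Ω) hdvd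
        rwa [Polynomial.map_map, ← IsScalarTower.algebraMap_eq] at this
      have hpΩsplits : ((p.map (algebraMap ↥B Ω))).Splits :=
        Polynomial.Splits.of_dvd (IsAlgClosed.splits _)
          (Polynomial.map_ne_zero (minpoly.ne_zero hα)) hpΩdvd
      have hmonic : (p.map (algebraMap ↥B Ω)).Monic :=
        (minpoly.monic hαB).map _
      have hfact := hpΩsplits.eq_prod_roots_of_monic hmonic
      have hrootsN : ∀ r ∈ (p.map (algebraMap ↥B Ω)).roots, r ∈ N := by
        intro r hr
        apply hroots
        obtain ⟨t, ht⟩ := hpΩdvd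
        have h0 : Polynomial.eval r (Polynomial.map (algebraMap (↥B) Ω) p) = 0 :=
          Polynomial.isRoot_of_mem_roots hr
        rw [Polynomial.aeval_def, Polynomial.eval₂_eq_eval_map, ht, Polynomial.eval_mul, h0,
          zero_mul]
      have hcN : (↑(p.coeff i) : Ω) ∈ N := by
        have : (↑(p.coeff i) : Ω) = (p.map (algebraMap ↥B Ω)).coeff i := by
          rw [Polynomial.coeff_map]; rfl
        rw [this, hfact]
        exact coeff_prod_mem N _ hrootsN i
      have hcB : (↑(p.coeff i) : Ω) ∈ B := (p.coeff i).2
      have : (↑(p.coeff i) : Ω) ∈ (⊥ : IntermediateField K Ω) := by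
        rw [← hint]; exact ⟨hcN, hcB⟩
      rw [IntermediateField.mem_bot] at this
      obtain ⟨k, hk⟩ := this
      refine ⟨k, ?_⟩
      apply Subtype.ext
      rw [← hk]
      exact (IsScalarTower.algebraMap_apply K ↥B Ω k).symm
    have hlift : p ∈ Polynomial.lifts (algebraMap K ↥B) :=
      (Polynomial.lifts_iff_coeff_lifts p).2 hcoeff
    obtain ⟨p₀, hp₀⟩ := (Polynomial.mem_lifts _).1 hlift
    have hp₀ne : p₀ ≠ 0 := by
      intro h
      rw [h, Polynomial.map_zero] at hp₀
      exact minpoly.ne_zero hαB hp₀.symm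
    have haev : Polynomial.aeval α p₀ = 0 := by
      have : Polynomial.aeval α (p₀.map (algebraMap K ↥B)) = Polynomial.aeval α p₀ :=
        Polynomial.aeval_map_algebraMap _ _ _
      rw [hp₀] at this
      rw [← this, hp]
      exact minpoly.aeval ↥B α
    have hge : d ≤ p.natDegree := by
      have := Polynomial.natDegree_le_of_dvd (minpoly.dvd K α haev) hp₀ne
      rw [hd] at this
      have h2 : p₀.natDegree = p.natDegree := by
        rw [← hp₀, Polynomial.natDegree_map]
      omega
    omega
  -- finrank K M = d * n
  have hMrank : Module.finrank K ↥M = d * n := by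
    have heq : restrictScalars K (adjoin ↥B {α}) = M := by
      rw [restrictScalars_adjoin_eq_sup, hM, sup_comm]
    have h1 : Module.finrank ↥B ↥(adjoin ↥B {α}) = d := by
      rw [adjoin.finrank hαB, hdeg]
    have h2 : Module.finrank K ↥B * Module.finrank ↥B ↥(adjoin ↥B {α})
        = Module.finrank K ↥(adjoin ↥B {α}) :=
      Module.finrank_mul_finrank K ↥B ↥(adjoin ↥B {α})
    have h3 : Module.finrank K ↥(adjoin ↥B {α}) = Module.finrank K ↥M := by
      rw [← heq]; rfl
    rw [← h3, ← h2, h1, hn, mul_comm]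
  -- restriction to K⟮α+β⟯ is injective on embeddings
  have hE : K⟮α + β⟯ ≤ M := by
    rw [adjoin_simple_le_iff]; exact hsum
  haveI : FiniteDimensional K K⟮α+β⟯ := adjoin.finiteDimensional (hα.add hβ)
  haveI : CharZero ↥B := charZero_of_injective_algebraMap (algebraMap K ↥B).injective
  have hinj : Function.Injective
      (fun σ : ↥M →ₐ[K] Ω => σ.comp (inclusion hE)) := by
    intro σ₁ σ₂ hres
    set xα : ↥M := ⟨α, hαM⟩ with hxα
    set xβ : ↥M := ⟨β, hβM⟩ with hxβ
    have hsumeq : σ₁ xα + σ₁ xβ = σ₂ xα + σ₂ xβ := by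
      have h0 : σ₁ ⟨α + β, hsum⟩ = σ₂ ⟨α + β, hsum⟩ := by
        have := congrArg (fun f : ↥K⟮α+β⟯ →ₐ[K] Ω => f (AdjoinSimple.gen K (α + β))) hres
        exact this
      have hx : (⟨α + β, hsum⟩ : ↥M) = xα + xβ := rfl
      rw [hx, map_add, map_add] at h0
      exact h0
    -- the embeddings restricted to B
    set f₁ : ↥B →ₐ[K] Ω := σ₁.comp (inclusion (le_sup_right : K⟮β⟯ ≤ M)) with hf₁
    set f₂ : ↥B →ₐ[K] Ω := σ₂.comp (inclusion (le_sup_right : K⟮β⟯ ≤ M)) with hf₂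
    set genβ : ↥B := AdjoinSimple.gen K β with hgenβ
    have hfβ₁ : f₁ genβ = σ₁ xβ := rfl
    have hfβ₂ : f₂ genβ = σ₂ xβ := rfl
    -- values at α lie in N
    have hσαN : ∀ σ : ↥M →ₐ[K] Ω, σ xα ∈ N := by
      intro σ
      let h := σ.comp (inclusion (le_sup_left : K⟮α⟯ ≤ M))
      have : σ xα = h (AdjoinSimple.gen K α) := rfl
      rw [this]
      exact h.fieldRange_le_normalClosure ⟨_, rfl⟩
    -- values at β lie in B
    have hσβB : ∀ f : ↥B →ₐ[K] Ω, f genβ ∈ B := by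
      intro f
      have h2 : f genβ ∈ f.fieldRange := ⟨genβ, rfl⟩
      rwa [AlgHom.fieldRange_of_normal f] at h2
    -- the difference is in N ⊓ B = ⊥
    have hcB : σ₂ xβ - σ₁ xβ ∈ B := by
      rw [← hfβ₁, ← hfβ₂]; exact sub_mem (hσβB f₂) (hσβB f₁)
    have hcN : σ₂ xβ - σ₁ xβ ∈ N := by
      have : σ₂ xβ - σ₁ xβ = σ₁ xα - σ₂ xα := by linear_combination -hsumeq
      rw [this]; exact sub_mem (hσαN σ₁) (hσαN σ₂)
    have hcbot : σ₂ xβ - σ₁ xβ ∈ (⊥ : IntermediateField K Ω) := by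
      rw [← hint]; exact ⟨hcN, hcB⟩
    rw [IntermediateField.mem_bot] at hcbot
    obtain ⟨k, hk⟩ := hcbot
    -- pass to automorphisms of B
    set g₁ : ↥B ≃ₐ[K] ↥B := f₁.restrictNormal' ↥B with hg₁
    set g₂ : ↥B ≃ₐ[K] ↥B := f₂.restrictNormal' ↥B with hg₂
    have hcomm : ∀ (f : ↥B →ₐ[K] Ω) (x : ↥B), ((f.restrictNormal' ↥B) x : Ω) = f x := by
      intro f x
      exact f.restrictNormal_commutes ↥B x
    set c' : ↥B := algebraMap K ↥B k with hc'
    have hc'Ω : (c' : Ω) = algebraMap K Ω k := (IsScalarTower.algebraMap_apply K ↥B Ω k).symm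
    have hgg : g₂ genβ = g₁ genβ + c' := by
      apply Subtype.ext
      push_cast
      rw [show ((g₂ genβ : ↥B) : Ω) = f₂ genβ from hcomm f₂ genβ,
        show ((g₁ genβ : ↥B) : Ω) = f₁ genβ from hcomm f₁ genβ, hfβ₁, hfβ₂, hc'Ω, hk]
      ring
    set g : ↥B ≃ₐ[K] ↥B := g₁⁻¹ * g₂ with hg
    have hgβ : g genβ = genβ + c' := by
      rw [hg, AlgEquiv.mul_apply, hgg, map_add]
      congr 1
      · exact g₁.symm_apply_apply genβ
      · rw [hc']; exact (g₁⁻¹).commutes k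
    have hgc' : ∀ m : ℕ, (g ^ m) c' = c' := fun m => by
      rw [hc']; exact (g ^ m).commutes k
    have hpow : ∀ m : ℕ, (g ^ m) genβ = genβ + m • c' := by
      intro m
      induction m with
      | zero => simp
      | succ m ih =>
        rw [pow_succ, AlgEquiv.mul_apply, hgβ, map_add, ih, hgc' m, succ_nsmul, add_assoc]
    have hm : 0 < orderOf g := orderOf_pos g
    have h1 : genβ = genβ + orderOf g • c' := by
      have h := hpow (orderOf g)
      rwa [pow_orderOf_eq_one, AlgEquiv.one_apply] at h
    have hc0 : c' = 0 := by
      have h3 : orderOf g • c' = 0 := (left_eq_add.mp h1)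
      have h4 : ((orderOf g : ℕ) : ↥B) * c' = 0 := by rw [← nsmul_eq_mul]; exact h3
      rcases mul_eq_zero.mp h4 with h | h
      · exact absurd h (Nat.cast_ne_zero.mpr hm.ne')
      · exact h
    have hkc : σ₂ xβ = σ₁ xβ := by
      have h5 : algebraMap K Ω k = 0 := by
        rw [← hc'Ω, hc0]; simp
      rw [h5] at hk
      linear_combination -hk
    have hkα : σ₁ xα = σ₂ xα := by linear_combination hsumeq + hkc
    have hMadj : M = adjoin K ({α} ∪ {β}) := by rw [hM, adjoin_union]
    apply algHom_ext_of_eq_adjoin K hMadj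
    intro x hx
    rcases hx with hx | hx
    · rw [Set.mem_singleton_iff] at hx
      subst hx
      exact hkα
    · rw [Set.mem_singleton_iff] at hx
      subst hx
      exact hkc.symm
  
  have hcard : Module.finrank K ↥M ≤ Module.finrank K K⟮α+β⟯ := by
    rw [← AlgHom.card K ↥M Ω, ← AlgHom.card K ↥K⟮α+β⟯ Ω]
    exact Fintype.card_le_of_injective _ hinj
  have heq : K⟮α + β⟯ = M := eq_of_le_of_finrank_le hE hcard
  exact ⟨heq, by rw [heq, hMrank]⟩
end
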